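/- There is an absolute constant C > 0 such that for every locally absolutely continuous f : (0,∞) → ℂ with ‖∂_r f‖_{L²} + ‖⟨log₋ r⟩^{-1} r^{-1} f‖_{L²} < ∞, one has sup_{r>0} ⟨log₋ r⟩^{-1/2} |f(r)| ≤ C ( ‖∂_r f‖_{L²} + ‖⟨log₋ r⟩^{-1} r^{-1} f‖_{L²} ). -/

import Mathlib

open MeasureTheory Set

/-- The `L²` norm with respect to the measure `2π r dr` on `(0,∞)`. -/
noncomputable def L2w (g : ℝ → ℂ) : ℝ :=
  Real.sqrt (2 * Real.pi * ∫ r in Set.Ioi (0:ℝ), ‖g r‖ ^ 2 * r)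

/-- The Japanese bracket `⟨x⟩ = (1+x²)^{1/2}`. -/
noncomputable def jap (x : ℝ) : ℝ := Real.sqrt (1 + x ^ 2)

/-- `log₋ r = max(−log r, 0)`. -/
noncomputable def logm (r : ℝ) : ℝ := max (-Real.log r) 0

/-- Local absolute continuity on `(0,∞)`, encoded via the fundamental theorem of calculus. -/
def LocAC (f : ℝ → ℂ) : Prop :=
  ∀ a b : ℝ, 0 < a → a ≤ b →
    IntegrableOn (deriv f) (Set.Icc a b) ∧
    ∀ x ∈ Set.Icc a b, f x = f a + ∫ t in a..x, deriv f t

lemma stepEstimate (f : ℝ → ℂ) (hf : LocAC f)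
    (h1 : IntegrableOn (fun r => ‖deriv f r‖ ^ 2 * r) (Set.Ioi (0:ℝ)))
    {a b : ℝ} (ha : 0 < a) (hab : a ≤ b) :
    ‖f b - f a‖ ≤ Real.sqrt (∫ r in Set.Ioi (0:ℝ), ‖deriv f r‖ ^ 2 * r) *
      Real.sqrt (Real.log (b / a)) := by
  obtain ⟨hint, hrep⟩ := hf a b ha hab
  have hsub : Set.Ioc a b ⊆ Set.Ioi (0:ℝ) := fun t ht => lt_trans ha ht.1
  have hb0 : 0 < b := lt_of_lt_of_le ha hab
  have hIoc : IntegrableOn (fun t => ‖deriv f t‖ ^ 2 * t) (Set.Ioc a b) :=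
    h1.mono_set hsub
  -- step 1: norm bound by integral of norm
  have h2' : f b - f a = ∫ t in a..b, deriv f t := by
    rw [hrep b ⟨hab, le_rfl⟩]; ring
  have hnorm : ‖f b - f a‖ ≤ ∫ t in Set.Ioc a b, ‖deriv f t‖ := by
    rw [h2']
    calc ‖∫ t in a..b, deriv f t‖ ≤ ∫ t in a..b, ‖deriv f t‖ :=
          intervalIntegral.norm_integral_le_integral_norm hab
      _ = ∫ t in Set.Ioc a b, ‖deriv f t‖ := intervalIntegral.integral_of_le hab
  -- Hölder
  set μ := volume.restrict (Set.Ioc a b)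
  set F : ℝ → ℝ := fun t => ‖deriv f t‖ * Real.sqrt t with hF
  set G : ℝ → ℝ := fun t => (Real.sqrt t)⁻¹ with hG
  have haeIoc : ∀ᵐ t ∂μ, t ∈ Set.Ioc a b := ae_restrict_mem measurableSet_Ioc
  have hFmeas : AEStronglyMeasurable F μ :=
    (((stronglyMeasurable_deriv f).measurable.norm).mul
      Real.continuous_sqrt.measurable).aestronglyMeasurable
  have hGmeas : AEStronglyMeasurable G μ :=
    (Real.continuous_sqrt.measurable.inv).aestronglyMeasurable
  have hF2 : Integrable (fun t => F t ^ 2) μ := by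
    refine hIoc.congr ?_
    filter_upwards [haeIoc] with t ht
    have : (0:ℝ) ≤ t := le_of_lt (lt_trans ha ht.1)
    simp only [hF]
    rw [mul_pow, Real.sq_sqrt this]
  have hinv : IntegrableOn (fun t => t⁻¹) (Set.Ioc a b) := by
    refine (ContinuousOn.integrableOn_Icc ?_).mono_set Set.Ioc_subset_Icc_self
    exact continuousOn_inv₀.mono (fun t ht => ne_of_gt (lt_of_lt_of_le ha ht.1))
  have hG2 : Integrable (fun t => G t ^ 2) μ := by
    refine hinv.congr ?_
    filter_upwards [haeIoc] with t ht
    have : (0:ℝ) ≤ t := le_of_lt (lt_trans ha ht.1)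
    simp only [hG]
    rw [inv_pow, Real.sq_sqrt this]
  have hFmem : MemLp F (ENNReal.ofReal 2) μ := by
    rw [show ENNReal.ofReal 2 = 2 by norm_num]
    exact (memLp_two_iff_integrable_sq hFmeas).2 hF2
  have hGmem : MemLp G (ENNReal.ofReal 2) μ := by
    rw [show ENNReal.ofReal 2 = 2 by norm_num]
    exact (memLp_two_iff_integrable_sq hGmeas).2 hG2
  have hconj : (2:ℝ).HolderConjugate 2 := Real.holderConjugate_iff.2 ⟨one_lt_two, by norm_num⟩
  have holder := integral_mul_le_Lp_mul_Lq_of_nonneg hconj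
    (ae_of_all μ (fun t => by positivity)) (ae_of_all μ (fun t => by positivity)) hFmem hGmem
  have hFG : ∫ t, F t * G t ∂μ = ∫ t in Set.Ioc a b, ‖deriv f t‖ := by
    refine setIntegral_congr_fun measurableSet_Ioc (fun t ht => ?_)
    have ht0 : (0:ℝ) < t := lt_trans ha ht.1
    have : Real.sqrt t ≠ 0 := ne_of_gt (Real.sqrt_pos.2 ht0)
    simp only [hF, hG]
    field_simp
  have hrpow : ∀ x : ℝ, x ^ (2:ℝ) = x ^ (2:ℕ) := fun x => by
    rw [← Real.rpow_natCast x 2]; norm_num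
  have hFint : ∫ t, F t ^ (2:ℝ) ∂μ ≤ ∫ r in Set.Ioi (0:ℝ), ‖deriv f r‖ ^ 2 * r := by
    calc ∫ t, F t ^ (2:ℝ) ∂μ = ∫ t, F t ^ (2:ℕ) ∂μ := by simp_rw [hrpow]
      _ = ∫ t in Set.Ioc a b, ‖deriv f t‖ ^ 2 * t := by
            refine setIntegral_congr_fun measurableSet_Ioc (fun t ht => ?_)
            have : (0:ℝ) ≤ t := le_of_lt (lt_trans ha ht.1)
            simp only [hF]; rw [mul_pow, Real.sq_sqrt this]
      _ ≤ ∫ r in Set.Ioi (0:ℝ), ‖deriv f r‖ ^ 2 * r := by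
            refine setIntegral_mono_set h1 ?_ (HasSubset.Subset.eventuallyLE hsub)
            filter_upwards [ae_restrict_mem measurableSet_Ioi] with t ht
            exact mul_nonneg (by positivity) (le_of_lt ht)
  have hGint : ∫ t, G t ^ (2:ℝ) ∂μ = Real.log (b / a) := by
    calc ∫ t, G t ^ (2:ℝ) ∂μ = ∫ t in Set.Ioc a b, t⁻¹ := by
          simp_rw [hrpow]
          refine setIntegral_congr_fun measurableSet_Ioc (fun t ht => ?_)
          have : (0:ℝ) ≤ t := le_of_lt (lt_trans ha ht.1)
          simp only [hG]; rw [inv_pow, Real.sq_sqrt this]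
      _ = ∫ t in a..b, t⁻¹ := (intervalIntegral.integral_of_le hab).symm
      _ = Real.log (b / a) := by
          rw [← integral_one_div]
          · simp_rw [one_div]
          · intro h
            rcases h with h
            exact absurd (le_trans (Set.uIcc_of_le hab ▸ h).1 (le_refl 0)) (not_le.2 ha)
  calc ‖f b - f a‖ ≤ ∫ t in Set.Ioc a b, ‖deriv f t‖ := hnorm
    _ = ∫ t, F t * G t ∂μ := hFG.symm
    _ ≤ (∫ t, F t ^ (2:ℝ) ∂μ) ^ (1/(2:ℝ)) * (∫ t, G t ^ (2:ℝ) ∂μ) ^ (1/(2:ℝ)) := holder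
    _ ≤ Real.sqrt (∫ r in Set.Ioi (0:ℝ), ‖deriv f r‖ ^ 2 * r) *
        Real.sqrt (Real.log (b / a)) := by
        rw [← Real.sqrt_eq_rpow, ← Real.sqrt_eq_rpow, hGint]
        exact mul_le_mul_of_nonneg_right (Real.sqrt_le_sqrt hFint) (Real.sqrt_nonneg _)

lemma weight_eq {t : ℝ} (ht1 : 1 ≤ t) :
    ((jap (logm t) * t)⁻¹) ^ 2 * ‖(z : ℂ)‖ ^ 2 * t = ‖z‖ ^ 2 * t⁻¹ := by
  have ht0 : (0:ℝ) < t := lt_of_lt_of_le zero_lt_one ht1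
  have hlm : logm t = 0 := max_eq_right (neg_nonpos.2 (Real.log_nonneg ht1))
  have hj : jap (logm t) = 1 := by rw [hlm]; simp [jap]
  rw [hj, one_mul]
  field_simp

lemma goodPoint (f : ℝ → ℂ) (hf : LocAC f)
    (h2 : IntegrableOn (fun r => ((jap (logm r) * r)⁻¹) ^ 2 * ‖f r‖ ^ 2 * r)
      (Set.Ioi (0:ℝ)))
    {c : ℝ} (hc1 : 1 ≤ c) :
    ∃ s ∈ Set.Icc c (2*c),
      ‖f s‖ * Real.sqrt (Real.log 2) ≤
        Real.sqrt (∫ r in Set.Ioi (0:ℝ), ((jap (logm r) * r)⁻¹) ^ 2 * ‖f r‖ ^ 2 * r) := by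
  have hc0 : 0 < c := lt_of_lt_of_le zero_lt_one hc1
  have hcc : c ≤ 2 * c := by linarith
  obtain ⟨hint, hrep⟩ := hf c (2*c) hc0 hcc
  have hcont : ContinuousOn f (Set.Icc c (2*c)) := by
    have hprim : ContinuousOn (fun x => ∫ t in Set.Ioc c x, deriv f t) (Set.Icc c (2*c)) :=
      intervalIntegral.continuousOn_primitive hint
    refine ((continuousOn_const (c := f c)).add hprim).congr fun x hx => ?_
    rw [hrep x hx, intervalIntegral.integral_of_le hx.1]; rfl
  obtain ⟨s, hs, hmin⟩ :=
    isCompact_Icc.exists_isMinOn ⟨c, Set.left_mem_Icc.2 hcc⟩ hcont.norm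
  refine ⟨s, hs, ?_⟩
  have hminOn : ∀ x ∈ Set.Icc c (2*c), ‖f s‖ ≤ ‖f x‖ := fun x hx => hmin hx
  have hsub : Set.Ioc c (2*c) ⊆ Set.Ioi (0:ℝ) := fun t ht => lt_trans hc0 ht.1
  have haeid : ∀ t ∈ Set.Ioc c (2*c),
      ((jap (logm t) * t)⁻¹) ^ 2 * ‖f t‖ ^ 2 * t = ‖f t‖ ^ 2 * t⁻¹ := fun t ht =>
    weight_eq (le_trans hc1 (le_of_lt ht.1))
  have hfin : IntegrableOn (fun t => ‖f t‖ ^ 2 * t⁻¹) (Set.Ioc c (2*c)) := by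
    refine (h2.mono_set hsub).congr ?_
    filter_upwards [ae_restrict_mem measurableSet_Ioc] with t ht
    exact haeid t ht
  have hconst : IntegrableOn (fun t => ‖f s‖ ^ 2 * t⁻¹) (Set.Ioc c (2*c)) := by
    refine (ContinuousOn.integrableOn_Icc ?_).mono_set Set.Ioc_subset_Icc_self
    exact continuousOn_const.mul
      (continuousOn_inv₀.mono (fun t ht => ne_of_gt (lt_of_lt_of_le hc0 ht.1)))
  have hlogint : ∫ t in Set.Ioc c (2*c), t⁻¹ = Real.log 2 := by
    rw [← intervalIntegral.integral_of_le hcc]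
    have h0 : (0:ℝ) ∉ Set.uIcc c (2*c) := by
      rw [Set.uIcc_of_le hcc]
      intro h
      exact absurd h.1 (not_le.2 hc0)
    calc ∫ t in c..(2*c), t⁻¹ = ∫ t in c..(2*c), 1/t := by simp_rw [one_div]
      _ = Real.log ((2*c)/c) := integral_one_div h0
      _ = Real.log 2 := by rw [mul_div_assoc, div_self (ne_of_gt hc0), mul_one]
  have key : ‖f s‖ ^ 2 * Real.log 2 ≤
      ∫ r in Set.Ioi (0:ℝ), ((jap (logm r) * r)⁻¹) ^ 2 * ‖f r‖ ^ 2 * r := by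
    calc ‖f s‖ ^ 2 * Real.log 2 = ∫ t in Set.Ioc c (2*c), ‖f s‖ ^ 2 * t⁻¹ := by
          rw [integral_const_mul, hlogint]
      _ ≤ ∫ t in Set.Ioc c (2*c), ‖f t‖ ^ 2 * t⁻¹ := by
          refine setIntegral_mono_on hconst hfin measurableSet_Ioc (fun t ht => ?_)
          have ht0 : (0:ℝ) < t := lt_trans hc0 ht.1
          have := hminOn t (Set.Ioc_subset_Icc_self ht)
          have h2' : ‖f s‖ ^ 2 ≤ ‖f t‖ ^ 2 := by
            apply pow_le_pow_left₀ (norm_nonneg _) this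
          exact mul_le_mul_of_nonneg_right h2' (le_of_lt (inv_pos.2 ht0))
      _ = ∫ t in Set.Ioc c (2*c), ((jap (logm t) * t)⁻¹) ^ 2 * ‖f t‖ ^ 2 * t :=
          (setIntegral_congr_fun measurableSet_Ioc haeid).symm
      _ ≤ ∫ r in Set.Ioi (0:ℝ), ((jap (logm r) * r)⁻¹) ^ 2 * ‖f r‖ ^ 2 * r := by
          refine setIntegral_mono_set h2 ?_ (HasSubset.Subset.eventuallyLE hsub)
          filter_upwards [ae_restrict_mem measurableSet_Ioi] with t ht
          have : (0:ℝ) < t := ht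
          positivity
  calc ‖f s‖ * Real.sqrt (Real.log 2) = Real.sqrt (‖f s‖ ^ 2 * Real.log 2) := by
        rw [Real.sqrt_mul (by positivity), Real.sqrt_sq (norm_nonneg _)]
    _ ≤ _ := Real.sqrt_le_sqrt key


/-- Weighted `L∞` estimate: `‖⟨log₋ r⟩^{-1/2} f‖_{L∞} ≲ ‖f‖_{𝓗̇¹_0}`. -/
theorem weighted_Linfty_estimate :
    ∃ C : ℝ, 0 < C ∧
      ∀ f : ℝ → ℂ, LocAC f →
        IntegrableOn (fun r => ‖deriv f r‖ ^ 2 * r) (Set.Ioi (0:ℝ)) →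
        IntegrableOn (fun r => ((jap (logm r) * r)⁻¹) ^ 2 * ‖f r‖ ^ 2 * r)
          (Set.Ioi (0:ℝ)) →
        ∀ r ∈ Set.Ioi (0:ℝ),
          (Real.sqrt (jap (logm r)))⁻¹ * ‖f r‖ ≤
            C * (L2w (deriv f)
              + L2w (fun s => (((jap (logm s) * s)⁻¹ : ℝ) : ℂ) * f s)) := by
  refine ⟨1, one_pos, ?_⟩
  intro f hf h1 h2 r hr
  have hr0 : (0:ℝ) < r := hr
  set A := Real.sqrt (∫ t in Set.Ioi (0:ℝ), ‖deriv f t‖ ^ 2 * t) with hA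
  set B := Real.sqrt (∫ t in Set.Ioi (0:ℝ), ((jap (logm t) * t)⁻¹) ^ 2 * ‖f t‖ ^ 2 * t)
    with hB
  have hA0 : 0 ≤ A := Real.sqrt_nonneg _
  have hB0 : 0 ≤ B := Real.sqrt_nonneg _
  set c := max r 1 with hc
  have hc1 : 1 ≤ c := le_max_right _ _
  have hc0 : 0 < c := lt_of_lt_of_le zero_lt_one hc1
  have hrc : r ≤ c := le_max_left _ _
  obtain ⟨s, hs, hsB⟩ := goodPoint f hf h2 hc1
  have hrs : r ≤ s := le_trans hrc hs.1
  have hs0 : 0 < s := lt_of_lt_of_le hr0 hrs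
  set x := logm r with hx
  have hx0 : 0 ≤ x := le_max_right _ _
  -- log bound
  have hcr : Real.log c - Real.log r = x := by
    rcases le_total 1 r with h | h
    · rw [hx, logm, hc, max_eq_left h,
        max_eq_right (neg_nonpos.2 (Real.log_nonneg h))]
      ring
    · rw [hx, logm, hc, max_eq_right h, Real.log_one,
        max_eq_left (neg_nonneg.2 (Real.log_nonpos (le_of_lt hr0) h))]
      ring
  have hlog : Real.log (s / r) ≤ Real.log 2 + x := by
    have hmono : Real.log (s / r) ≤ Real.log ((2 * c) / r) := by
      apply Real.log_le_log (by positivity)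
      gcongr
      exact hs.2
    rw [Real.log_div (ne_of_gt hs0) (ne_of_gt hr0),
      Real.log_div (by positivity) (ne_of_gt hr0),
      Real.log_mul two_ne_zero (ne_of_gt hc0)] at hmono
    rw [Real.log_div (ne_of_gt hs0) (ne_of_gt hr0)]
    linarith [hcr]
  -- step estimate
  have hstep : ‖f s - f r‖ ≤ A * Real.sqrt (Real.log (s / r)) :=
    stepEstimate f hf h1 hr0 hrs
  have h_fr : ‖f r‖ ≤ ‖f s‖ + A * Real.sqrt (Real.log 2 + x) := by
    have h1' : ‖f r‖ - ‖f s‖ ≤ ‖f s - f r‖ := by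
      rw [norm_sub_rev]; exact norm_sub_norm_le _ _
    have h2' : A * Real.sqrt (Real.log (s / r)) ≤ A * Real.sqrt (Real.log 2 + x) :=
      mul_le_mul_of_nonneg_left (Real.sqrt_le_sqrt hlog) hA0
    linarith
  -- jap bounds
  have hj1 : 1 ≤ jap x := by
    rw [jap]
    have := Real.sqrt_le_sqrt (show (1:ℝ) ≤ 1 + x ^ 2 by nlinarith [sq_nonneg x])
    simpa using this
  have hsj1 : (1:ℝ) ≤ Real.sqrt (jap x) := by
    have := Real.sqrt_le_sqrt hj1
    simpa using this
  have hsjpos : 0 < Real.sqrt (jap x) := lt_of_lt_of_le zero_lt_one hsj1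
  have h_inv : (Real.sqrt (jap x))⁻¹ ≤ 1 := by
    rw [inv_le_one_iff₀]; right; exact hsj1
  have h_key : Real.sqrt (Real.log 2 + x) ≤ Real.sqrt 2 * Real.sqrt (jap x) := by
    rw [← Real.sqrt_mul (by norm_num : (0:ℝ) ≤ 2)]
    apply Real.sqrt_le_sqrt
    have hxx : (1 + x) / 2 ≤ Real.sqrt (1 + x ^ 2) := by
      rw [Real.le_sqrt (by positivity) (by positivity)]
      nlinarith [sq_nonneg (x - 1)]
    rw [jap]
    nlinarith [Real.log_two_lt_d9, hxx]
  have hq : (Real.sqrt (jap x))⁻¹ * Real.sqrt (Real.log 2 + x) ≤ Real.sqrt 2 := by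
    calc (Real.sqrt (jap x))⁻¹ * Real.sqrt (Real.log 2 + x)
        ≤ (Real.sqrt (jap x))⁻¹ * (Real.sqrt 2 * Real.sqrt (jap x)) :=
          mul_le_mul_of_nonneg_left h_key (by positivity)
      _ = Real.sqrt 2 * ((Real.sqrt (jap x))⁻¹ * Real.sqrt (jap x)) := by ring
      _ = Real.sqrt 2 := by rw [inv_mul_cancel₀ (ne_of_gt hsjpos), mul_one]
  -- fs bound
  have h1' : (1:ℝ) ≤ Real.sqrt 2 * Real.sqrt (Real.log 2) := by
    rw [← Real.sqrt_mul (by norm_num : (0:ℝ) ≤ 2),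
      show (1:ℝ) = Real.sqrt 1 from Real.sqrt_one.symm]
    exact Real.sqrt_le_sqrt (by nlinarith [Real.log_two_gt_d9])
  have h_fs : ‖f s‖ ≤ Real.sqrt 2 * B := by
    calc ‖f s‖ = ‖f s‖ * 1 := (mul_one _).symm
      _ ≤ ‖f s‖ * (Real.sqrt 2 * Real.sqrt (Real.log 2)) :=
          mul_le_mul_of_nonneg_left h1' (norm_nonneg _)
      _ = Real.sqrt 2 * (‖f s‖ * Real.sqrt (Real.log 2)) := by ring
      _ ≤ Real.sqrt 2 * B := mul_le_mul_of_nonneg_left hsB (by positivity)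
  -- L2w identities
  have hL1 : L2w (deriv f) = Real.sqrt (2 * Real.pi) * A := by
    rw [L2w, Real.sqrt_mul (by positivity), hA]
  have hL2 : L2w (fun s => (((jap (logm s) * s)⁻¹ : ℝ) : ℂ) * f s)
      = Real.sqrt (2 * Real.pi) * B := by
    have hInt : (∫ t in Set.Ioi (0:ℝ),
        ‖(((jap (logm t) * t)⁻¹ : ℝ) : ℂ) * f t‖ ^ 2 * t)
        = ∫ t in Set.Ioi (0:ℝ), ((jap (logm t) * t)⁻¹) ^ 2 * ‖f t‖ ^ 2 * t := by
      refine setIntegral_congr_fun measurableSet_Ioi (fun t ht => ?_)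
      have ht0 : (0:ℝ) < t := ht
      have hw : (0:ℝ) ≤ (jap (logm t) * t)⁻¹ :=
        inv_nonneg.2 (mul_nonneg (Real.sqrt_nonneg _) (le_of_lt ht0))
      rw [norm_mul, Complex.norm_real, Real.norm_of_nonneg hw]
      ring
    rw [L2w, hInt, Real.sqrt_mul (by positivity), hB]
  have hpi : Real.sqrt 2 ≤ Real.sqrt (2 * Real.pi) :=
    Real.sqrt_le_sqrt (by nlinarith [Real.pi_gt_three])
  rw [hL1, hL2]
  calc (Real.sqrt (jap x))⁻¹ * ‖f r‖
      ≤ (Real.sqrt (jap x))⁻¹ * (‖f s‖ + A * Real.sqrt (Real.log 2 + x)) :=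
        mul_le_mul_of_nonneg_left h_fr (by positivity)
    _ = (Real.sqrt (jap x))⁻¹ * ‖f s‖
        + ((Real.sqrt (jap x))⁻¹ * Real.sqrt (Real.log 2 + x)) * A := by ring
    _ ≤ 1 * (Real.sqrt 2 * B) + Real.sqrt 2 * A :=
        add_le_add (mul_le_mul h_inv h_fs (norm_nonneg _) zero_le_one)
          (mul_le_mul_of_nonneg_right hq hA0)
    _ = Real.sqrt 2 * B + Real.sqrt 2 * A := by ring
    _ ≤ Real.sqrt (2 * Real.pi) * B + Real.sqrt (2 * Real.pi) * A :=
        add_le_add (mul_le_mul_of_nonneg_right hpi hB0)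
          (mul_le_mul_of_nonneg_right hpi hA0)
    _ = 1 * (Real.sqrt (2 * Real.pi) * A + Real.sqrt (2 * Real.pi) * B) := by ring
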